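/- Let t ↦ (X(t), y(t)) be a differentiable trajectory of the replicator dynamics with all entries of X(t) and y(t) positive, and let (x*, y*) be an interior Nash equilibrium with value u*. Then for every zero-sum vector δ ∈ ℝ^{m_X}, the time derivative of H satisfies d/dt H(X(t); δ) = (δᵀ U dy)², where dy = y(t) − y*; in particular d/dt H(X(t); δ) ≥ 0. -/

import Mathlib

/-- Along a differentiable trajectory of the replicator dynamics with positive
entries and an interior Nash equilibrium `(x*, y*)` with value `u*`, for every zero-sum
vector `δ ∈ ℝ^{m_X}`, the time derivative of `H(X;δ) = δᵀ U (log X)ᵀ δ` equals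
`(δᵀ U dy)²` with `dy = y(t) − y*`; in particular it is nonnegative. -/
theorem stmt_5 (mX mY : ℕ) (U : Fin mX → Fin mY → ℝ)
    (X : ℝ → Fin mX → Fin mY → ℝ) (Y : ℝ → Fin mY → ℝ)
    (hXpos : ∀ t i j, 0 < X t i j) (hYpos : ∀ t j, 0 < Y t j)
    (hXsum : ∀ t j, ∑ i : Fin mX, X t i j = 1) (hYsum : ∀ t, ∑ j : Fin mY, Y t j = 1)
    -- replicator dynamics of X
    (hX : ∀ t i j, HasDerivAt (fun s => X s i j)
      (X t i j * ((Y t j * ∑ j' : Fin mY, U i j' * Y t j') -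
        ∑ i' : Fin mX, X t i' j * (Y t j * ∑ j' : Fin mY, U i' j' * Y t j'))) t)
    -- replicator dynamics of Y
    (hY : ∀ t j, HasDerivAt (fun s => Y s j)
      (-(Y t j * (((∑ i : Fin mX, U i j * (∑ j' : Fin mY, X t i j' * Y t j')) +
          ∑ i : Fin mX, X t i j * ∑ j' : Fin mY, U i j' * Y t j') -
        ∑ j₂ : Fin mY, Y t j₂ *
          ((∑ i : Fin mX, U i j₂ * (∑ j' : Fin mY, X t i j' * Y t j')) +
            ∑ i : Fin mX, X t i j₂ * ∑ j' : Fin mY, U i j' * Y t j')))) t)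
    -- interior Nash equilibrium (x*, y*) with value u*
    (xs : Fin mX → ℝ) (ys : Fin mY → ℝ) (ustar : ℝ)
    (hxspos : ∀ i, 0 < xs i) (hxssum : ∑ i : Fin mX, xs i = 1)
    (hyspos : ∀ j, 0 < ys j) (hyssum : ∑ j : Fin mY, ys j = 1)
    (hNx : ∀ j, ∑ i : Fin mX, U i j * xs i = ustar)
    (hNy : ∀ i, ∑ j : Fin mY, U i j * ys j = ustar)
    (t : ℝ) (δ : Fin mX → ℝ) (hδ : ∑ i : Fin mX, δ i = 0) :
    HasDerivAt
      (fun s => ∑ i : Fin mX, ∑ i' : Fin mX, ∑ j : Fin mY,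
        δ i * U i j * Real.log (X s i' j) * δ i')
      ((∑ i : Fin mX, ∑ j : Fin mY, δ i * U i j * (Y t j - ys j))^2) t ∧
    0 ≤ (∑ i : Fin mX, ∑ j : Fin mY, δ i * U i j * (Y t j - ys j))^2 := by
  refine ⟨?_, sq_nonneg _⟩
  -- abbreviations
  set g : Fin mX → Fin mY → ℝ := fun i j => Y t j * ∑ j' : Fin mY, U i j' * Y t j' with hg
  -- derivative with the "raw" value
  have hd : HasDerivAt (fun s => ∑ i : Fin mX, ∑ i' : Fin mX, ∑ j : Fin mY,
      δ i * U i j * Real.log (X s i' j) * δ i')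
      (∑ i : Fin mX, ∑ i' : Fin mX, ∑ j : Fin mY,
        δ i * U i j * (g i' j - ∑ i'' : Fin mX, X t i'' j * g i'' j) * δ i') t := by
    apply HasDerivAt.fun_sum; intro i _
    apply HasDerivAt.fun_sum; intro i' _
    apply HasDerivAt.fun_sum; intro j _
    have h1 := (hX t i' j).log (hXpos t i' j).ne'
    have h1' : HasDerivAt (fun s => Real.log (X s i' j))
        (g i' j - ∑ i'' : Fin mX, X t i'' j * g i'' j) t := by
      convert h1 using 1
      rw [mul_div_cancel_left₀ _ (hXpos t i' j).ne']
    exact (h1'.const_mul (δ i * U i j)).mul_const (δ i')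
  convert hd using 1
  -- algebraic identity
  have hfac : ∀ i : Fin mX, ∑ j' : Fin mY, δ i * U i j' * Y t j'
      = δ i * ∑ j' : Fin mY, U i j' * Y t j' := by
    intro i; rw [Finset.mul_sum]; exact Finset.sum_congr rfl fun _ _ => by ring
  have hzero : ∑ i : Fin mX, ∑ j : Fin mY, δ i * U i j * ys j = 0 := by
    have h1 : ∀ i : Fin mX, ∑ j : Fin mY, δ i * U i j * ys j = δ i * ustar := by
      intro i
      rw [← hNy i, Finset.mul_sum]
      exact Finset.sum_congr rfl fun j _ => by ring
    simp only [h1]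
    rw [← Finset.sum_mul, hδ, zero_mul]
  have hE : (∑ i : Fin mX, ∑ j : Fin mY, δ i * U i j * (Y t j - ys j))
      = ∑ i : Fin mX, ∑ j : Fin mY, δ i * U i j * Y t j := by
    simp only [mul_sub, Finset.sum_sub_distrib, hzero, sub_zero]
  set E : ℝ := ∑ i : Fin mX, ∑ j : Fin mY, δ i * U i j * Y t j with hEdef
  have hT : ∀ j : Fin mY, (∑ i' : Fin mX,
      (g i' j - ∑ i'' : Fin mX, X t i'' j * g i'' j) * δ i') = Y t j * E := by
    intro j
    simp only [sub_mul, Finset.sum_sub_distrib]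
    rw [← Finset.mul_sum, hδ, mul_zero, sub_zero, hEdef]
    simp only [hfac, hg]
    rw [Finset.mul_sum]
    exact Finset.sum_congr rfl fun i _ => by ring
  have key : (∑ i : Fin mX, ∑ i' : Fin mX, ∑ j : Fin mY,
      δ i * U i j * (g i' j - ∑ i'' : Fin mX, X t i'' j * g i'' j) * δ i') = E ^ 2 := by
    have step : ∀ i : Fin mX, (∑ i' : Fin mX, ∑ j : Fin mY,
        δ i * U i j * (g i' j - ∑ i'' : Fin mX, X t i'' j * g i'' j) * δ i')
        = ∑ j : Fin mY, δ i * U i j * Y t j * E := by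
      intro i
      rw [Finset.sum_comm]
      refine Finset.sum_congr rfl fun j _ => ?_
      have : (∑ i' : Fin mX, δ i * U i j *
          (g i' j - ∑ i'' : Fin mX, X t i'' j * g i'' j) * δ i')
          = δ i * U i j * ∑ i' : Fin mX,
            (g i' j - ∑ i'' : Fin mX, X t i'' j * g i'' j) * δ i' := by
        rw [Finset.mul_sum]
        exact Finset.sum_congr rfl fun i' _ => by ring
      rw [this, hT j]; ring
    simp only [step]
    have h2 : ∀ i : Fin mX, ∑ j : Fin mY, δ i * U i j * Y t j * E
        = (∑ j : Fin mY, δ i * U i j * Y t j) * E := fun i => (Finset.sum_mul _ _ _).symm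
    simp only [h2]
    rw [← Finset.sum_mul, sq]
  rw [hE, key]
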